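/- Let $\mu$ be a measure and $\nu$ a finite measure on $(\Omega, \mathcal{A})$. Define $\nu_a(A) = \sup\{\int_A u\,d\mu : u \colon \Omega \to [0,\infty] \text{ measurable}, \int_E u\,d\mu \le \nu(E) \text{ for all measurable } E \subset A\}$. Then there exists a $\mu$-$\sigma$-finite set $\Sigma \in \mathcal{A}$ such that $\nu_a(A) = \nu_a(A \cap \Sigma)$ for all $A \in \mathcal{A}$. -/

import Mathlib

open MeasureTheory ENNReal

set_option maxHeartbeats 1000000

/-- The absolutely continuous part of `ν` with respect to `μ` in the de Giorgi
decomposition. -/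
noncomputable def acPart {Ω : Type*} [MeasurableSpace Ω]
    (μ ν : Measure Ω) (A : Set Ω) : ℝ≥0∞ :=
  ⨆ (u : Ω → ℝ≥0∞) (_ : Measurable u)
    (_ : ∀ E ⊆ A, MeasurableSet E → ∫⁻ ω in E, u ω ∂μ ≤ ν E),
    ∫⁻ ω in A, u ω ∂μ

/-- Any admissible function's integral is at most the acPart. -/
lemma le_acPart' {Ω : Type*} [MeasurableSpace Ω]
    (μ ν : Measure Ω) {A : Set Ω} {u : Ω → ℝ≥0∞} (hu : Measurable u)
    (hadm : ∀ E ⊆ A, MeasurableSet E → ∫⁻ ω in E, u ω ∂μ ≤ ν E) :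
    ∫⁻ ω in A, u ω ∂μ ≤ acPart μ ν A :=
  le_iSup_of_le u (le_iSup_of_le hu (le_iSup_of_le hadm le_rfl))

/-- If `ν` is a finite measure, the absolutely continuous part `ν_a` is
concentrated on a `μ`-σ-finite set: there is a measurable `μ`-σ-finite `Σ` with
`ν_a(A) = ν_a(A ∩ Σ)` for all measurable `A`. -/
theorem acPart_sigma_finite_concentration {Ω : Type*} [MeasurableSpace Ω]
    (μ ν : Measure Ω) [IsFiniteMeasure ν] :
    ∃ S : Set Ω, MeasurableSet S ∧
      (∃ g : ℕ → Set Ω, S = ⋃ n, g n ∧ ∀ n, MeasurableSet (g n) ∧ μ (g n) < ⊤) ∧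
      ∀ A : Set Ω, MeasurableSet A → acPart μ ν A = acPart μ ν (A ∩ S) := by
  classical
  set M := acPart μ ν Set.univ with hMdef
  have hMle : M ≤ ν Set.univ := by
    rw [hMdef, acPart]
    exact iSup_le fun u => iSup_le fun hu => iSup_le fun hadm =>
      hadm Set.univ le_rfl MeasurableSet.univ
  have hMne : M ≠ ∞ := (hMle.trans_lt (measure_lt_top ν _)).ne
  -- choose near-maximizers
  have hex : ∀ n : ℕ, ∃ u : Ω → ℝ≥0∞, Measurable u ∧
      (∀ E ⊆ (Set.univ : Set Ω), MeasurableSet E → ∫⁻ ω in E, u ω ∂μ ≤ ν E) ∧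
      M ≤ ∫⁻ ω, u ω ∂μ + ((n : ℝ≥0∞) + 1)⁻¹ := by
    intro n
    set ε : ℝ≥0∞ := ((n : ℝ≥0∞) + 1)⁻¹ with hε
    have hε0 : ε ≠ 0 := ENNReal.inv_ne_zero.mpr
      (ENNReal.add_ne_top.mpr ⟨ENNReal.natCast_ne_top n, one_ne_top⟩)
    by_cases h : M ≤ ε
    · exact ⟨0, measurable_const, fun E _ _ => by simp,
        by simpa using h⟩
    · push_neg at h
      have hM0 : M ≠ 0 := fun h0 => by simp [h0] at h
      have h1 : M - ε < acPart μ ν Set.univ := by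
        rw [← hMdef]; exact ENNReal.sub_lt_self hMne hM0 hε0
      simp only [acPart, lt_iSup_iff] at h1
      obtain ⟨u, hu, hadm, h1⟩ := h1
      refine ⟨u, hu, hadm, ?_⟩
      rw [Measure.restrict_univ] at h1
      calc M = M - ε + ε := (tsub_add_cancel_of_le h.le).symm
        _ ≤ ∫⁻ ω, u ω ∂μ + ε := add_le_add h1.le le_rfl
  choose u hu hadm hMn using hex
  -- integral bound for each u n
  have huint : ∀ n, ∫⁻ ω, u n ω ∂μ ≤ ν Set.univ := by
    intro n
    have h := hadm n Set.univ le_rfl MeasurableSet.univ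
    rwa [Measure.restrict_univ] at h
  set S : Set Ω := ⋃ n, {ω | 0 < u n ω} with hSdef
  have hS : MeasurableSet S :=
    MeasurableSet.iUnion fun n => measurableSet_lt measurable_const (hu n)
  have hSc : ∀ ω ∉ S, ∀ n, u n ω = 0 := by
    intro ω hω n
    by_contra h
    exact hω (Set.mem_iUnion.mpr ⟨n, lt_of_le_of_ne zero_le (Ne.symm h)⟩)
  refine ⟨S, hS, ?_, ?_⟩
  · -- σ-finiteness
    refine ⟨fun k => {ω | (((Nat.pairEquiv.symm k).2 : ℝ≥0∞) + 1)⁻¹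
        ≤ u (Nat.pairEquiv.symm k).1 ω}, ?_, ?_⟩
    · ext ω
      simp only [hSdef, Set.mem_iUnion, Set.mem_setOf_eq]
      constructor
      · rintro ⟨n, hn⟩
        obtain ⟨m, hm⟩ := ENNReal.exists_inv_nat_lt hn.ne'
        refine ⟨Nat.pairEquiv (n, m), ?_⟩
        rw [Equiv.symm_apply_apply]
        calc ((m : ℝ≥0∞) + 1)⁻¹ ≤ (m : ℝ≥0∞)⁻¹ :=
              ENNReal.inv_le_inv.mpr le_self_add
          _ ≤ u n ω := hm.le
      · rintro ⟨k, hk⟩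
        refine ⟨(Nat.pairEquiv.symm k).1, lt_of_lt_of_le ?_ hk⟩
        exact ENNReal.inv_pos.mpr (ENNReal.add_ne_top.mpr
          ⟨ENNReal.natCast_ne_top _, one_ne_top⟩)
    · intro k
      set n := (Nat.pairEquiv.symm k).1
      set m := (Nat.pairEquiv.symm k).2
      have hεm : ((m : ℝ≥0∞) + 1)⁻¹ ≠ 0 :=
        ENNReal.inv_ne_zero.mpr (ENNReal.add_ne_top.mpr
          ⟨ENNReal.natCast_ne_top _, one_ne_top⟩)
      have hεtop : ((m : ℝ≥0∞) + 1)⁻¹ ≠ ∞ := by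
        simp [ENNReal.inv_ne_top]
      refine ⟨measurableSet_le measurable_const (hu n), ?_⟩
      calc μ {ω | ((m : ℝ≥0∞) + 1)⁻¹ ≤ u n ω}
          ≤ (∫⁻ ω, u n ω ∂μ) / ((m : ℝ≥0∞) + 1)⁻¹ :=
            meas_ge_le_lintegral_div (hu n).aemeasurable hεm hεtop
        _ ≤ ν Set.univ / ((m : ℝ≥0∞) + 1)⁻¹ :=
            ENNReal.div_le_div_right (huint n) _
        _ < ∞ := ENNReal.div_lt_top (measure_ne_top ν _) hεm
  · -- main equality
    intro A hA
    -- key: any function admissible on A has zero integral on A \ S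
    have hzero : ∀ v : Ω → ℝ≥0∞, Measurable v →
        (∀ E ⊆ A, MeasurableSet E → ∫⁻ ω in E, v ω ∂μ ≤ ν E) →
        ∫⁻ ω in A \ S, v ω ∂μ = 0 := by
      intro v hv hadm'
      set B := A \ S with hB
      have hBm : MeasurableSet B := hA.diff hS
      set f := B.indicator v with hf
      have hfm : Measurable f := hv.indicator hBm
      have hfE : ∀ E : Set Ω, MeasurableSet E →
          ∫⁻ ω in E, f ω ∂μ = ∫⁻ ω in B ∩ E, v ω ∂μ := by
        intro E hE
        rw [hf, lintegral_indicator hBm, Measure.restrict_restrict hBm]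
      have hfadm : ∀ E : Set Ω, MeasurableSet E → ∫⁻ ω in E, f ω ∂μ ≤ ν E := by
        intro E hE
        rw [hfE E hE]
        exact (hadm' (B ∩ E) (Set.inter_subset_left.trans Set.diff_subset)
          (hBm.inter hE)).trans (measure_mono Set.inter_subset_right)
      have key : ∀ n : ℕ, ∫⁻ ω in B, v ω ∂μ ≤ ((n : ℝ≥0∞) + 1)⁻¹ := by
        intro n
        set w := fun ω => max (f ω) (u n ω) with hw
        have hwm : Measurable w := hfm.max (hu n)
        have hwadm : ∀ E ⊆ (Set.univ : Set Ω), MeasurableSet E →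
            ∫⁻ ω in E, w ω ∂μ ≤ ν E := by
          intro E _ hE
          rw [hw, setLIntegral_max hfm (hu n)]
          have hle : MeasurableSet {x | f x ≤ u n x} := measurableSet_le hfm (hu n)
          have hd : E ∩ {x | u n x < f x} = E \ {x | f x ≤ u n x} := by
            ext x; simp [Set.mem_diff, not_le]
          calc ∫⁻ x in E ∩ {x | f x ≤ u n x}, u n x ∂μ
                + ∫⁻ x in E ∩ {x | u n x < f x}, f x ∂μ
              ≤ ν (E ∩ {x | f x ≤ u n x}) + ν (E ∩ {x | u n x < f x}) :=
                add_le_add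
                  (hadm n _ (Set.subset_univ _) (hE.inter hle))
                  (hfadm _ (hE.inter (measurableSet_lt (hu n) hfm)))
            _ = ν E := by rw [hd, measure_inter_add_diff E hle]
        have hwle : ∫⁻ ω, w ω ∂μ ≤ M := by
          have h := le_acPart' μ ν hwm hwadm
          rwa [Measure.restrict_univ, ← hMdef] at h
        have hsplit : ∫⁻ ω in B, f ω ∂μ + ∫⁻ ω in Bᶜ, u n ω ∂μ
            ≤ ∫⁻ ω, w ω ∂μ := by
          rw [← lintegral_add_compl w hBm]
          exact add_le_add
            (setLIntegral_mono hwm fun x _ => le_max_left _ _)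
            (setLIntegral_mono hwm fun x _ => le_max_right _ _)
        have hfB : ∫⁻ ω in B, f ω ∂μ = ∫⁻ ω in B, v ω ∂μ := by
          rw [hfE B hBm, Set.inter_self]
        have hun0 : ∫⁻ ω in Bᶜ, u n ω ∂μ = ∫⁻ ω, u n ω ∂μ := by
          have hsum := lintegral_add_compl (u n) hBm (μ := μ)
          have hz : ∫⁻ ω in B, u n ω ∂μ = 0 := by
            have : ∀ ω ∈ B, u n ω = (0 : ℝ≥0∞) := fun ω hω =>
              hSc ω hω.2 n
            rw [setLIntegral_congr_fun (g := fun _ => 0) hBm this,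
              lintegral_zero]
          rw [hz, zero_add] at hsum
          exact hsum
        have hfinal : ∫⁻ ω in B, v ω ∂μ + M ≤ M + ((n : ℝ≥0∞) + 1)⁻¹ := by
          calc ∫⁻ ω in B, v ω ∂μ + M
              ≤ ∫⁻ ω in B, v ω ∂μ + (∫⁻ ω, u n ω ∂μ + ((n : ℝ≥0∞) + 1)⁻¹) :=
                add_le_add le_rfl (hMn n)
            _ = (∫⁻ ω in B, f ω ∂μ + ∫⁻ ω in Bᶜ, u n ω ∂μ)
                + ((n : ℝ≥0∞) + 1)⁻¹ := by rw [hfB, hun0, add_assoc]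
            _ ≤ ∫⁻ ω, w ω ∂μ + ((n : ℝ≥0∞) + 1)⁻¹ := add_le_add hsplit le_rfl
            _ ≤ M + ((n : ℝ≥0∞) + 1)⁻¹ := add_le_add hwle le_rfl
        rw [add_comm (∫⁻ ω in B, v ω ∂μ) M] at hfinal
        exact (ENNReal.add_le_add_iff_left hMne).mp hfinal
      have : ∫⁻ ω in B, v ω ∂μ ≤ 0 := by
        refine ENNReal.le_of_forall_pos_le_add fun ε hε _ => ?_
        obtain ⟨n, hn⟩ := ENNReal.exists_inv_nat_lt
          (show (ε : ℝ≥0∞) ≠ 0 by exact_mod_cast hε.ne')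
        rw [zero_add]
        calc ∫⁻ ω in B, v ω ∂μ ≤ ((n : ℝ≥0∞) + 1)⁻¹ := key n
          _ ≤ ((n : ℝ≥0∞))⁻¹ := ENNReal.inv_le_inv.mpr le_self_add
          _ ≤ (ε : ℝ≥0∞) := hn.le
      exact le_antisymm this zero_le
    refine le_antisymm ?_ ?_
    · -- acPart A ≤ acPart (A ∩ S)
      rw [acPart]
      refine iSup_le fun v => iSup_le fun hv => iSup_le fun hadm' => ?_
      have h0 := hzero v hv hadm'
      calc ∫⁻ ω in A, v ω ∂μ
          = ∫⁻ ω in A ∩ S, v ω ∂μ + ∫⁻ ω in A \ S, v ω ∂μ :=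
            (lintegral_inter_add_diff v A hS).symm
        _ = ∫⁻ ω in A ∩ S, v ω ∂μ := by rw [h0, add_zero]
        _ ≤ acPart μ ν (A ∩ S) := le_acPart' μ ν hv fun E hE hEm =>
            hadm' E (hE.trans Set.inter_subset_left) hEm
    · -- acPart (A ∩ S) ≤ acPart A
      conv_lhs => rw [acPart]
      refine iSup_le fun v => iSup_le fun hv => iSup_le fun hadm' => ?_
      set f := (A ∩ S).indicator v with hf
      have hASm : MeasurableSet (A ∩ S) := hA.inter hS
      have hfm : Measurable f := hv.indicator hASm
      have hfE : ∀ E : Set Ω, MeasurableSet E →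
          ∫⁻ ω in E, f ω ∂μ = ∫⁻ ω in (A ∩ S) ∩ E, v ω ∂μ := by
        intro E hE
        rw [hf, lintegral_indicator hASm, Measure.restrict_restrict hASm]
      have hfadm : ∀ E ⊆ A, MeasurableSet E → ∫⁻ ω in E, f ω ∂μ ≤ ν E := by
        intro E hE hEm
        rw [hfE E hEm]
        exact (hadm' ((A ∩ S) ∩ E) Set.inter_subset_left
          (hASm.inter hEm)).trans (measure_mono Set.inter_subset_right)
      calc ∫⁻ ω in A ∩ S, v ω ∂μ
          = ∫⁻ ω in (A ∩ S) ∩ A, v ω ∂μ := by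
            rw [Set.inter_eq_left.mpr Set.inter_subset_left]
        _ = ∫⁻ ω in A, f ω ∂μ := (hfE A hA).symm
        _ ≤ acPart μ ν A := le_acPart' μ ν hfm hfadm
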